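/- Let g be a C² function on [0,1] with g(0) = g(1) = 0, and let L g = g'' + g'/r − g/r². Then ∫₀¹ |(d/dr)(r g)|² (1/r) dr ≤ (∫₀¹ |L g|² r dr)^{1/2} (∫₀¹ |g|² r dr)^{1/2}. -/

import Mathlib

open MeasureTheory Set

/-- For a C² function `g` on `[0,1]` with `g(0) = g(1) = 0` and
`L g = g'' + g'/r − g/r²`, one has
`∫₀¹ |(rg)'|²/r dr ≤ (∫₀¹ |Lg|² r dr)^{1/2} (∫₀¹ |g|² r dr)^{1/2}`. -/
theorem stmt1 (g : ℝ → ℂ) (hg : ContDiffOn ℝ 2 g (Icc (0:ℝ) 1))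
    (h0 : g 0 = 0) (h1 : g 1 = 0) :
    (∫⁻ r in Ioo (0:ℝ) 1,
        ENNReal.ofReal (‖derivWithin (fun s : ℝ => (s : ℂ) * g s) (Icc (0:ℝ) 1) r‖ ^ 2 / r)) ≤
      (∫⁻ r in Ioo (0:ℝ) 1,
          ENNReal.ofReal
            (‖derivWithin (derivWithin g (Icc (0:ℝ) 1)) (Icc (0:ℝ) 1) r
                + derivWithin g (Icc (0:ℝ) 1) r / (r : ℂ) - g r / (r : ℂ) ^ 2‖ ^ 2 * r))
          ^ ((1 : ℝ) / 2) *
      (∫⁻ r in Ioo (0:ℝ) 1, ENNReal.ofReal (‖g r‖ ^ 2 * r)) ^ ((1 : ℝ) / 2) := by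
  have uI : UniqueDiffOn ℝ (Icc (0:ℝ) 1) := uniqueDiffOn_Icc zero_lt_one
  set g1 : ℝ → ℂ := derivWithin g (Icc (0:ℝ) 1) with hg1def
  set g2 : ℝ → ℂ := derivWithin g1 (Icc (0:ℝ) 1) with hg2def
  have hgc : ContinuousOn g (Icc (0:ℝ) 1) := hg.continuousOn
  have hg1s : ContDiffOn ℝ 1 g1 (Icc (0:ℝ) 1) := hg.derivWithin uI (by norm_num)
  have hg1c : ContinuousOn g1 (Icc (0:ℝ) 1) := hg1s.continuousOn
  have hg2s : ContDiffOn ℝ 0 g2 (Icc (0:ℝ) 1) := hg1s.derivWithin uI (by norm_num)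
  have hg2c : ContinuousOn g2 (Icc (0:ℝ) 1) := hg2s.continuousOn
  -- derivatives at interior points
  have hgd : ∀ r ∈ Ioo (0:ℝ) 1, HasDerivAt g (g1 r) r := by
    intro r hr
    have hmem : Icc (0:ℝ) 1 ∈ nhds r := Icc_mem_nhds hr.1 hr.2
    have hd := (hg.differentiableOn (by norm_num) r (Ioo_subset_Icc_self hr)).differentiableAt hmem
    rw [hg1def, derivWithin_of_mem_nhds hmem]
    exact hd.hasDerivAt
  have hg1d : ∀ r ∈ Ioo (0:ℝ) 1, HasDerivAt g1 (g2 r) r := by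
    intro r hr
    have hmem : Icc (0:ℝ) 1 ∈ nhds r := Icc_mem_nhds hr.1 hr.2
    have hd := (hg1s.differentiableOn one_ne_zero r (Ioo_subset_Icc_self hr)).differentiableAt hmem
    rw [hg2def, derivWithin_of_mem_nhds hmem]
    exact hd.hasDerivAt
  -- bounds
  obtain ⟨M1, hM1⟩ := isCompact_Icc.exists_bound_of_continuousOn hg1c
  obtain ⟨M2, hM2⟩ := isCompact_Icc.exists_bound_of_continuousOn hg2c
  have hM1nn : 0 ≤ M1 := le_trans (norm_nonneg _) (hM1 0 (by norm_num))
  have hM2nn : 0 ≤ M2 := le_trans (norm_nonneg _) (hM2 0 (by norm_num))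
  have hgb : ∀ x ∈ Icc (0:ℝ) 1, ‖g x‖ ≤ M1 * x := by
    intro x hx
    have := (convex_Icc (0:ℝ) 1).norm_image_sub_le_of_norm_hasDerivWithin_le
      (fun y hy => (hg.differentiableOn (by norm_num) y hy).hasDerivWithinAt)
      hM1 (left_mem_Icc.2 zero_le_one) hx
    simpa [h0, abs_of_nonneg hx.1] using this
  -- the functions
  set v : ℝ → ℂ := fun r => g r + r * g1 r with hvdef
  set Lg : ℝ → ℂ := fun r => g2 r + g1 r / (r : ℂ) - g r / (r : ℂ) ^ 2 with hLgdef
  set A : ℝ → ℝ := fun r => (Lg r * (starRingEnd ℂ) (g r)).re * r with hAdef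
  set B : ℝ → ℝ := fun r => ‖v r‖ ^ 2 / r with hBdef
  set D : ℝ → ℝ := fun r => ‖Lg r‖ * ‖g r‖ * r with hDdef
  set F : ℝ → ℝ := fun r => (v r * (starRingEnd ℂ) (g r)).re with hFdef
  have hnorm_ofReal : ∀ r : ℝ, 0 ≤ r → ‖(r:ℂ)‖ = r := fun r hr => by
    simp [Complex.norm_real, abs_of_nonneg hr]
  -- pointwise estimates on Ioo
  have hvb : ∀ r ∈ Ioo (0:ℝ) 1, ‖v r‖ ≤ 2 * M1 * r := by
    intro r hr
    have h1 : ‖g r‖ ≤ M1 * r := hgb r (Ioo_subset_Icc_self hr)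
    have h2 : ‖(r:ℂ) * g1 r‖ ≤ r * M1 := by
      rw [norm_mul, hnorm_ofReal r hr.1.le]
      exact mul_le_mul_of_nonneg_left (hM1 r (Ioo_subset_Icc_self hr)) hr.1.le
    calc ‖v r‖ ≤ ‖g r‖ + ‖(r:ℂ) * g1 r‖ := norm_add_le _ _
      _ ≤ M1 * r + r * M1 := add_le_add h1 h2
      _ = 2 * M1 * r := by ring
  have hBnn : ∀ r ∈ Ioo (0:ℝ) 1, 0 ≤ B r := fun r hr => by
    have : (0:ℝ) < r := hr.1
    positivity
  have hBb : ∀ r ∈ Ioo (0:ℝ) 1, |B r| ≤ 4 * M1 ^ 2 := by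
    intro r hr
    have hr0 : (0:ℝ) < r := hr.1
    have hv := hvb r hr
    have hv0 : (0:ℝ) ≤ ‖v r‖ := norm_nonneg _
    rw [abs_of_nonneg (hBnn r hr), hBdef]
    rw [div_le_iff₀ hr0]
    nlinarith [hr.2, sq_nonneg (‖v r‖ - 2 * M1 * r)]
  have hDb : ∀ r ∈ Ioo (0:ℝ) 1, D r ≤ M1 * M2 + 2 * M1 ^ 2 := by
    intro r hr
    have hr0 : (0:ℝ) < r := hr.1
    have h1 : ‖g1 r‖ ≤ M1 := hM1 r (Ioo_subset_Icc_self hr)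
    have h2 : ‖g2 r‖ ≤ M2 := hM2 r (Ioo_subset_Icc_self hr)
    have h3 : ‖g r‖ ≤ M1 * r := hgb r (Ioo_subset_Icc_self hr)
    have h4 : ‖Lg r‖ ≤ M2 + M1 / r + (M1 * r) / r ^ 2 := by
      rw [hLgdef]
      refine le_trans (norm_sub_le _ _) ?_
      have e1 : ‖g1 r / (r:ℂ)‖ = ‖g1 r‖ / r := by rw [norm_div, hnorm_ofReal r hr0.le]
      have e2 : ‖g r / (r:ℂ) ^ 2‖ = ‖g r‖ / r ^ 2 := by
        rw [norm_div, norm_pow, hnorm_ofReal r hr0.le]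
      refine add_le_add (le_trans (norm_add_le _ _) (add_le_add h2 ?_)) ?_
      · rw [e1]; gcongr
      · rw [e2]; gcongr
    have h5 : M2 + M1 / r + (M1 * r) / r ^ 2 = M2 + 2 * M1 / r := by
      field_simp; ring
    rw [h5] at h4
    have hgn : (0:ℝ) ≤ ‖g r‖ := norm_nonneg _
    have hLn : (0:ℝ) ≤ ‖Lg r‖ := norm_nonneg _
    have : D r ≤ (M2 + 2 * M1 / r) * (M1 * r) * r := by
      rw [hDdef]; dsimp only
      have := mul_le_mul h4 h3 hgn (by positivity)
      exact mul_le_mul_of_nonneg_right this hr0.le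
    refine this.trans ?_
    have : (M2 + 2 * M1 / r) * (M1 * r) * r = M1 * M2 * r ^ 2 + 2 * M1 ^ 2 * r := by
      field_simp
    rw [this]
    have hr1 : r ≤ 1 := hr.2.le
    have hr2 : r ^ 2 ≤ 1 := by nlinarith
    nlinarith [mul_nonneg hM1nn hM2nn, sq_nonneg M1]
  have hAD : ∀ r ∈ Ioo (0:ℝ) 1, -A r ≤ D r ∧ |A r| ≤ D r := by
    intro r hr
    have hr0 : (0:ℝ) < r := hr.1
    have h1 : |(Lg r * (starRingEnd ℂ) (g r)).re| ≤ ‖Lg r‖ * ‖g r‖ := by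
      refine le_trans (Complex.abs_re_le_norm _) ?_
      rw [norm_mul]
      gcongr
      exact (norm_star _).le
    constructor
    · have := (abs_le.1 h1).1
      rw [hAdef]; dsimp only
      rw [hDdef]; dsimp only
      nlinarith
    · rw [hAdef, hDdef]; dsimp only
      rw [abs_mul, abs_of_nonneg hr0.le]
      exact mul_le_mul_of_nonneg_right h1 hr0.le
  -- continuity on Ioo
  have hsubI : Ioo (0:ℝ) 1 ⊆ Icc 0 1 := Ioo_subset_Icc_self
  have hrne : ∀ r ∈ Ioo (0:ℝ) 1, (r:ℂ) ≠ 0 := fun r hr =>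
    Complex.ofReal_ne_zero.2 (ne_of_gt hr.1)
  have hLgcont : ContinuousOn Lg (Ioo (0:ℝ) 1) := by
    rw [hLgdef]
    refine ContinuousOn.sub (ContinuousOn.add (hg2c.mono hsubI) ?_) ?_
    · exact (hg1c.mono hsubI).div (Complex.continuous_ofReal.continuousOn) hrne
    · exact (hgc.mono hsubI).div
        ((Complex.continuous_ofReal.continuousOn).pow 2)
        (fun r hr => pow_ne_zero 2 (hrne r hr))
  have hvcont : ContinuousOn v (Icc (0:ℝ) 1) := by
    rw [hvdef]
    exact hgc.add ((Complex.continuous_ofReal.continuousOn).mul hg1c)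
  have hAcont : ContinuousOn A (Ioo (0:ℝ) 1) := by
    rw [hAdef]
    exact ((Complex.continuous_re.comp_continuousOn
      (hLgcont.mul (continuous_star.comp_continuousOn (hgc.mono hsubI))))).mul
      continuous_id.continuousOn
  have hBcont : ContinuousOn B (Ioo (0:ℝ) 1) := by
    rw [hBdef]
    exact (((hvcont.mono hsubI).norm).pow 2).div continuous_id.continuousOn
      (fun r hr => ne_of_gt hr.1)
  have hDcont : ContinuousOn D (Ioo (0:ℝ) 1) := by
    rw [hDdef]
    exact ((hLgcont.norm.mul (hgc.mono hsubI).norm)).mul continuous_id.continuousOn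
  have hFcont : ContinuousOn F (Icc (0:ℝ) 1) :=
    Complex.continuous_re.comp_continuousOn
      (hvcont.mul (continuous_star.comp_continuousOn hgc))
  -- integrability
  have hintOf : ∀ (f : ℝ → ℝ) (C : ℝ), ContinuousOn f (Ioo (0:ℝ) 1) →
      (∀ r ∈ Ioo (0:ℝ) 1, |f r| ≤ C) → IntegrableOn f (Ioo (0:ℝ) 1) := by
    intro f C hf hC
    refine Integrable.mono' (integrable_const C) (hf.aestronglyMeasurable measurableSet_Ioo) ?_
    refine (ae_restrict_iff' measurableSet_Ioo).2 (ae_of_all _ fun r hr => ?_)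
    simpa [Real.norm_eq_abs] using hC r hr
  have hintA : IntegrableOn A (Ioo (0:ℝ) 1) :=
    hintOf A (M1 * M2 + 2 * M1 ^ 2) hAcont (fun r hr => (hAD r hr).2.trans (hDb r hr))
  have hintB : IntegrableOn B (Ioo (0:ℝ) 1) :=
    hintOf B (4 * M1 ^ 2) hBcont hBb
  have hintD : IntegrableOn D (Ioo (0:ℝ) 1) :=
    hintOf D (M1 * M2 + 2 * M1 ^ 2) hDcont (fun r hr => by
      rw [abs_of_nonneg (show (0:ℝ) ≤ D r from
        mul_nonneg (mul_nonneg (norm_nonneg _) (norm_nonneg _)) hr.1.le)]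
      exact hDb r hr)
  -- derivative of F
  have hF' : ∀ r ∈ Ioo (0:ℝ) 1, HasDerivAt F (A r + B r) r := by
    intro r hr
    have hr0 : (r:ℝ) ≠ 0 := ne_of_gt hr.1
    have hrC : (r:ℂ) ≠ 0 := hrne r hr
    have h1 := hgd r hr
    have h2 := hg1d r hr
    have hs : HasDerivAt (fun s : ℝ => (s:ℂ)) 1 r := by
      simpa using (hasDerivAt_id r).ofReal_comp
    have hv : HasDerivAt v (g1 r + (1 * g1 r + r * g2 r)) r := h1.add (hs.mul h2)
    have hcg : HasDerivAt (fun s => (starRingEnd ℂ) (g s)) ((starRingEnd ℂ) (g1 r)) r := by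
      exact h1.star
    have hG : HasDerivAt (fun s => v s * (starRingEnd ℂ) (g s))
        ((g1 r + (1 * g1 r + r * g2 r)) * (starRingEnd ℂ) (g r)
          + v r * (starRingEnd ℂ) (g1 r)) r := hv.mul hcg
    have hF : HasDerivAt F ((g1 r + (1 * g1 r + r * g2 r)) * (starRingEnd ℂ) (g r)
          + v r * (starRingEnd ℂ) (g1 r)).re r := by
      simpa [hFdef, Function.comp_def] using Complex.reCLM.hasFDerivAt.comp_hasDerivAt r hG
    convert hF using 1
    -- A r + B r = E.re
    have hnv : ‖v r‖ ^ 2 = (v r * (starRingEnd ℂ) (v r)).re := by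
      rw [Complex.mul_conj]
      simp [Complex.normSq_eq_norm_sq, ← Complex.ofReal_pow]
    have key : (Lg r * (starRingEnd ℂ) (g r)) * (r:ℂ) + (v r * (starRingEnd ℂ) (v r)) / (r:ℂ)
        = (g1 r + (1 * g1 r + r * g2 r)) * (starRingEnd ℂ) (g r)
          + v r * (starRingEnd ℂ) (g1 r) := by
      rw [hLgdef, hvdef]
      dsimp only
      rw [map_add, map_mul]
      rw [Complex.conj_ofReal]
      field_simp
      ring
    have e1 : A r = ((Lg r * (starRingEnd ℂ) (g r)) * (r:ℂ)).re := by
      rw [hAdef]; dsimp only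
      rw [Complex.mul_re]
      simp
    have e2 : B r = ((v r * (starRingEnd ℂ) (v r)) / (r:ℂ)).re := by
      rw [hBdef]; dsimp only
      rw [hnv, Complex.div_ofReal_re]
    rw [e1, e2, ← Complex.add_re, key]
  -- FTC
  have hivi : IntervalIntegrable (fun r => A r + B r) volume 0 1 := by
    rw [intervalIntegrable_iff_integrableOn_Ioo_of_le zero_le_one]
    exact hintA.add hintB
  have hFTC : ∫ r in (0:ℝ)..1, (A r + B r) = F 1 - F 0 :=
    intervalIntegral.integral_eq_sub_of_hasDeriv_right_of_le zero_le_one hFcont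
      (fun x hx => (hF' x hx).hasDerivWithinAt) hivi
  have hF0 : F 0 = 0 := by rw [hFdef, hvdef]; dsimp only; rw [h0]; simp
  have hF1 : F 1 = 0 := by rw [hFdef]; dsimp only; rw [h1]; simp
  have hzero : (∫ r in Ioo (0:ℝ) 1, A r) + ∫ r in Ioo (0:ℝ) 1, B r = 0 := by
    have h := hFTC
    rw [intervalIntegral.integral_of_le zero_le_one,
      MeasureTheory.integral_Ioc_eq_integral_Ioo, hF0, hF1,
      integral_add hintA hintB] at h
    linarith
  have hBD : ∫ r in Ioo (0:ℝ) 1, B r ≤ ∫ r in Ioo (0:ℝ) 1, D r := by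
    have h1 : ∫ r in Ioo (0:ℝ) 1, B r = ∫ r in Ioo (0:ℝ) 1, (-A r) := by
      rw [integral_neg]; linarith
    rw [h1]
    exact setIntegral_mono_on hintA.neg hintD measurableSet_Ioo (fun r hr => (hAD r hr).1)
  -- LHS as a real integral
  have hderiv_rg : ∀ r ∈ Ioo (0:ℝ) 1,
      derivWithin (fun s : ℝ => (s:ℂ) * g s) (Icc (0:ℝ) 1) r = v r := by
    intro r hr
    have hmem : Icc (0:ℝ) 1 ∈ nhds r := Icc_mem_nhds hr.1 hr.2
    have hs : HasDerivAt (fun s : ℝ => (s:ℂ)) 1 r := by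
      simpa using (hasDerivAt_id r).ofReal_comp
    have hd : HasDerivAt (fun s : ℝ => (s:ℂ) * g s) (1 * g r + r * g1 r) r := hs.mul (hgd r hr)
    rw [derivWithin_of_mem_nhds hmem, hd.deriv, hvdef]
    dsimp only; ring
  have hLHS : (∫⁻ r in Ioo (0:ℝ) 1,
      ENNReal.ofReal (‖derivWithin (fun s : ℝ => (s : ℂ) * g s) (Icc (0:ℝ) 1) r‖ ^ 2 / r))
      = ENNReal.ofReal (∫ r in Ioo (0:ℝ) 1, B r) := by
    have e : (∫⁻ r in Ioo (0:ℝ) 1,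
        ENNReal.ofReal (‖derivWithin (fun s : ℝ => (s : ℂ) * g s) (Icc (0:ℝ) 1) r‖ ^ 2 / r))
        = ∫⁻ r in Ioo (0:ℝ) 1, ENNReal.ofReal (B r) :=
      setLIntegral_congr_fun measurableSet_Ioo (fun r hr => by
        rw [hderiv_rg r hr])
    rw [e, ← ofReal_integral_eq_lintegral_ofReal hintB
      ((ae_restrict_iff' measurableSet_Ioo).2 (ae_of_all _ hBnn))]
  -- Cauchy-Schwarz via Hoelder
  set f1 : ℝ → ENNReal := fun r => ENNReal.ofReal (‖Lg r‖ * Real.sqrt r) with hf1def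
  set f2 : ℝ → ENNReal := fun r => ENNReal.ofReal (‖g r‖ * Real.sqrt r) with hf2def
  have hf1m : AEMeasurable f1 (volume.restrict (Ioo (0:ℝ) 1)) :=
    (ENNReal.continuous_ofReal.comp_continuousOn
      (hLgcont.norm.mul Real.continuous_sqrt.continuousOn)).aemeasurable measurableSet_Ioo
  have hf2m : AEMeasurable f2 (volume.restrict (Ioo (0:ℝ) 1)) :=
    (ENNReal.continuous_ofReal.comp_continuousOn
      (((hgc.mono hsubI).norm).mul Real.continuous_sqrt.continuousOn)).aemeasurable
      measurableSet_Ioo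
  have hconj : Real.HolderConjugate 2 2 := Real.holderConjugate_iff.mpr ⟨one_lt_two, by norm_num⟩
  have hHolder := ENNReal.lintegral_mul_le_Lp_mul_Lq (volume.restrict (Ioo (0:ℝ) 1))
    hconj hf1m hf2m
  have hDmul : (∫⁻ r in Ioo (0:ℝ) 1, ENNReal.ofReal (D r))
      = ∫⁻ r in Ioo (0:ℝ) 1, (f1 * f2) r :=
    setLIntegral_congr_fun measurableSet_Ioo (fun r hr => by
      simp only [hf1def, hf2def, Pi.mul_apply, hDdef]
      rw [← ENNReal.ofReal_mul (by positivity)]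
      congr 1
      rw [show ‖Lg r‖ * Real.sqrt r * (‖g r‖ * Real.sqrt r)
          = ‖Lg r‖ * ‖g r‖ * (Real.sqrt r * Real.sqrt r) by ring,
        Real.mul_self_sqrt hr.1.le])
  have hpow1 : (∫⁻ r in Ioo (0:ℝ) 1, f1 r ^ (2:ℝ))
      = ∫⁻ r in Ioo (0:ℝ) 1, ENNReal.ofReal
          (‖g2 r + g1 r / (r : ℂ) - g r / (r : ℂ) ^ 2‖ ^ 2 * r) :=
    setLIntegral_congr_fun measurableSet_Ioo (fun r hr => by
      rw [hf1def]; dsimp only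
      rw [ENNReal.ofReal_rpow_of_nonneg (by positivity) (by norm_num)]
      congr 1
      rw [show ((2:ℝ)) = ((2:ℕ):ℝ) by norm_num, Real.rpow_natCast]
      rw [mul_pow, Real.sq_sqrt hr.1.le, hLgdef])
  have hpow2 : (∫⁻ r in Ioo (0:ℝ) 1, f2 r ^ (2:ℝ))
      = ∫⁻ r in Ioo (0:ℝ) 1, ENNReal.ofReal (‖g r‖ ^ 2 * r) :=
    setLIntegral_congr_fun measurableSet_Ioo (fun r hr => by
      rw [hf2def]; dsimp only
      rw [ENNReal.ofReal_rpow_of_nonneg (by positivity) (by norm_num)]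
      congr 1
      rw [show ((2:ℝ)) = ((2:ℕ):ℝ) by norm_num, Real.rpow_natCast]
      rw [mul_pow, Real.sq_sqrt hr.1.le])
  calc (∫⁻ r in Ioo (0:ℝ) 1,
        ENNReal.ofReal (‖derivWithin (fun s : ℝ => (s : ℂ) * g s) (Icc (0:ℝ) 1) r‖ ^ 2 / r))
      = ENNReal.ofReal (∫ r in Ioo (0:ℝ) 1, B r) := hLHS
    _ ≤ ENNReal.ofReal (∫ r in Ioo (0:ℝ) 1, D r) := ENNReal.ofReal_le_ofReal hBD
    _ = ∫⁻ r in Ioo (0:ℝ) 1, ENNReal.ofReal (D r) :=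
        ofReal_integral_eq_lintegral_ofReal hintD
          ((ae_restrict_iff' measurableSet_Ioo).2 (ae_of_all _ fun r hr =>
            mul_nonneg (mul_nonneg (norm_nonneg _) (norm_nonneg _)) hr.1.le))
    _ = ∫⁻ r in Ioo (0:ℝ) 1, (f1 * f2) r := hDmul
    _ ≤ (∫⁻ r in Ioo (0:ℝ) 1, f1 r ^ (2:ℝ)) ^ ((1:ℝ)/2)
        * (∫⁻ r in Ioo (0:ℝ) 1, f2 r ^ (2:ℝ)) ^ ((1:ℝ)/2) := hHolder
    _ = _ := by rw [hpow1, hpow2]
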